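/- For all integers s, t ≥ 3, the metric dimension of the torus grid graph C_s □ C_t equals 3 if s or t is odd, and equals 4 if both s and t are even. -/

import Mathlib

open SimpleGraph

/-- `W` is a resolving set of `G`: every pair of distinct vertices is
distinguished by its distance to some vertex of `W`. -/
def IsResolving {V : Type*} (G : SimpleGraph V) (W : Set V) : Prop :=
  ∀ x y : V, x ≠ y → ∃ z ∈ W, G.dist x z ≠ G.dist y z

/-- The metric dimension of `G`: the minimum cardinality of a resolving set. -/
noncomputable def metricDim {V : Type*} (G : SimpleGraph V) : ℕ :=
  sInf {n | ∃ W : Set V, W.ncard = n ∧ IsResolving G W}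

namespace TorusMD

/-! ### ℕ-level circular distance -/

def cyc (n u v : ℕ) : ℕ := min (u - v + (v - u)) (n - (u - v + (v - u)))

lemma resolve01 {n U U' : ℕ} (hn : 3 ≤ n) (hU : U < n) (hU' : U' < n)
    (h0 : cyc n U 0 = cyc n U' 0) (h1 : cyc n U 1 = cyc n U' 1) : U = U' := by
  simp only [cyc] at *; omega

lemma inj_odd {s a X X' : ℕ} (hsa : s = 2*a+1) (hs : 3 ≤ s) (hX : X < s) (hX' : X' < s)
    (h : cyc s X 0 + cyc s X' a = cyc s X' 0 + cyc s X a) : X = X' := by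
  simp only [cyc] at *; omega

lemma halfE {s m : ℕ} (X : ℕ) (hsm : s = 2*m) (hX : X < s) :
    cyc s X m + cyc s X 0 = m := by
  simp only [cyc]; omega

lemma stepR {n P : ℕ} (hn : 3 ≤ n) (hP : P < n) :
    cyc n 1 P = cyc n 0 P + 1 ∨ cyc n 0 P = cyc n 1 P + 1 ∨ cyc n 1 P = cyc n 0 P := by
  simp only [cyc]; omega

lemma stepL {n P : ℕ} (hn : 3 ≤ n) (hP : P < n) :
    cyc n (n-1) P = cyc n 0 P + 1 ∨ cyc n 0 P = cyc n (n-1) P + 1 ∨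
      cyc n (n-1) P = cyc n 0 P := by
  simp only [cyc]; omega

lemma conf1 {s t m l P Q : ℕ} (hsm : s = 2*m) (htl : t = 2*l) (hm : 2 ≤ m) (hl : 2 ≤ l)
    (hP : P < s) (hQ : Q < t) (hc : (P = 0 ∨ m < P) ↔ (Q = 0 ∨ l < Q)) :
    cyc s 1 P + cyc t 0 Q = cyc s 0 P + cyc t 1 Q := by
  simp only [cyc]; omega

lemma conf2 {s t m l P Q : ℕ} (hsm : s = 2*m) (htl : t = 2*l) (hm : 2 ≤ m) (hl : 2 ≤ l)
    (hP : P < s) (hQ : Q < t) (hc : (P < m) ↔ (Q < l)) :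
    cyc s (s-1) P + cyc t 0 Q = cyc s 0 P + cyc t (t-1) Q := by
  simp only [cyc]; omega

lemma conf3 {s t m l P Q : ℕ} (hsm : s = 2*m) (htl : t = 2*l) (hm : 2 ≤ m) (hl : 2 ≤ l)
    (hP : P < s) (hQ : Q < t) (hc : (P = 0 ∨ m < P) ↔ (Q < l)) :
    cyc s 1 P + cyc t 0 Q = cyc s 0 P + cyc t (t-1) Q := by
  simp only [cyc]; omega

lemma conf4 {s t m l P Q : ℕ} (hsm : s = 2*m) (htl : t = 2*l) (hm : 2 ≤ m) (hl : 2 ≤ l)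
    (hP : P < s) (hQ : Q < t) (hc : (P < m) ↔ (Q = 0 ∨ l < Q)) :
    cyc s (s-1) P + cyc t 0 Q = cyc s 0 P + cyc t 1 Q := by
  simp only [cyc]; omega

lemma conf5 {s m P : ℕ} (hsm : s = 2*m) (hm : 2 ≤ m) (hP : P < s)
    (hc : (P < m) ↔ (P = 0 ∨ m < P)) :
    cyc s 1 P = cyc s (s-1) P := by
  simp only [cyc]; omega

lemma conf6 {t l Q : ℕ} (htl : t = 2*l) (hl : 2 ≤ l) (hQ : Q < t)
    (hc : (Q < l) ↔ (Q = 0 ∨ l < Q)) :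
    cyc t 1 Q = cyc t (t-1) Q := by
  simp only [cyc]; omega

lemma conf7 {s t m l P Q : ℕ} (hsm : s = 2*m) (htl : t = 2*l) (hm : 2 ≤ m) (hl : 2 ≤ l)
    (hP : P < s) (hQ : Q < t)
    (hc : (((P = 0 ∨ m < P) ↔ (P < m)) ∧ ((Q = 0 ∨ l < Q) ↔ (Q < l))) ∨
          (((P = 0 ∨ m < P) ↔ (Q < l)) ∧ ((Q = 0 ∨ l < Q) ↔ (P < m)))) :
    cyc s 1 P + cyc t 1 Q = cyc s (s-1) P + cyc t (t-1) Q := by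
  rcases hc with ⟨h1, h2⟩ | ⟨h1, h2⟩
  · have e1 := conf5 hsm hm hP (Iff.symm h1)
    have e2 := conf6 htl hl hQ (Iff.symm h2)
    omega
  · have e1 := conf3 hsm htl hm hl hP hQ h1
    have e2 := conf4 hsm htl hm hl hP hQ (Iff.symm h2)
    omega

lemma conf8 {s t m l P Q : ℕ} (hsm : s = 2*m) (htl : t = 2*l) (hm : 2 ≤ m) (hl : 2 ≤ l)
    (hP : P < s) (hQ : Q < t)
    (hc : (((P = 0 ∨ m < P) ↔ (P < m)) ∧ ((Q < l) ↔ (Q = 0 ∨ l < Q))) ∨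
          (((P = 0 ∨ m < P) ↔ (Q = 0 ∨ l < Q)) ∧ ((Q < l) ↔ (P < m)))) :
    cyc s 1 P + cyc t (t-1) Q = cyc s (s-1) P + cyc t 1 Q := by
  rcases hc with ⟨h1, h2⟩ | ⟨h1, h2⟩
  · have e1 := conf5 hsm hm hP (Iff.symm h1)
    have e2 := conf6 htl hl hQ h2
    omega
  · have e1 := conf1 hsm htl hm hl hP hQ h1
    have e2 := conf2 hsm htl hm hl hP hQ (Iff.symm h2)
    omega

/-! ### core lemmas -/

lemma core_odd {s t a X Y X' Y' : ℕ} (hsa : s = 2*a+1) (hs : 3 ≤ s) (ht : 3 ≤ t)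
    (hX : X < s) (hX' : X' < s) (hY : Y < t) (hY' : Y' < t)
    (h1 : cyc s X 0 + cyc t Y 0 = cyc s X' 0 + cyc t Y' 0)
    (h2 : cyc s X a + cyc t Y 0 = cyc s X' a + cyc t Y' 0)
    (h3 : cyc s X 0 + cyc t Y 1 = cyc s X' 0 + cyc t Y' 1) :
    X = X' ∧ Y = Y' := by
  have hx : X = X' := inj_odd hsa hs hX hX' (by omega)
  subst hx
  have hy0 : cyc t Y 0 = cyc t Y' 0 := by omega
  have hy1 : cyc t Y 1 = cyc t Y' 1 := by omega
  exact ⟨rfl, resolve01 ht hY hY' hy0 hy1⟩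

lemma core_even {s t m X Y X' Y' : ℕ} (hsm : s = 2*m) (hs : 3 ≤ s) (ht : 3 ≤ t)
    (hX : X < s) (hX' : X' < s) (hY : Y < t) (hY' : Y' < t)
    (h1 : cyc s X 0 + cyc t Y 0 = cyc s X' 0 + cyc t Y' 0)
    (h2 : cyc s X m + cyc t Y 0 = cyc s X' m + cyc t Y' 0)
    (h3 : cyc s X 0 + cyc t Y 1 = cyc s X' 0 + cyc t Y' 1)
    (h4 : cyc s X 1 + cyc t Y 1 = cyc s X' 1 + cyc t Y' 1) :
    X = X' ∧ Y = Y' := by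
  have e1 := halfE X hsm hX
  have e2 := halfE X' hsm hX'
  have hx0 : cyc s X 0 = cyc s X' 0 := by omega
  have hx1 : cyc s X 1 = cyc s X' 1 := by omega
  have hy0 : cyc t Y 0 = cyc t Y' 0 := by omega
  have hy1 : cyc t Y 1 = cyc t Y' 1 := by omega
  exact ⟨resolve01 hs hX hX' hx0 hx1, resolve01 ht hY hY' hy0 hy1⟩

lemma core_two {s t P Q : ℕ} (hs : 3 ≤ s) (ht : 3 ≤ t) (hP : P < s) (hQ : Q < t) :
    ∃ X1 Y1 X2 Y2 : ℕ, (X1 < s ∧ Y1 < t ∧ X2 < s ∧ Y2 < t) ∧ ¬(X1 = X2 ∧ Y1 = Y2) ∧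
      (cyc s X1 0 + cyc t Y1 0 = cyc s X2 0 + cyc t Y2 0) ∧
      (cyc s X1 P + cyc t Y1 Q = cyc s X2 P + cyc t Y2 Q) := by
  have sR := stepR hs hP
  have sL := stepL hs hP
  have tR := stepR ht hQ
  have tL := stepL ht hQ
  have H : (cyc s 1 P + cyc t 0 Q = cyc s 0 P + cyc t 1 Q) ∨
      (cyc s (s-1) P + cyc t 0 Q = cyc s 0 P + cyc t (t-1) Q) ∨
      (cyc s 1 P + cyc t 0 Q = cyc s 0 P + cyc t (t-1) Q) ∨
      (cyc s (s-1) P + cyc t 0 Q = cyc s 0 P + cyc t 1 Q) ∨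
      (cyc s 1 P = cyc s (s-1) P) ∨
      (cyc t 1 Q = cyc t (t-1) Q) := by omega
  have c10 : cyc s 1 0 = 1 := by simp only [cyc]; omega
  have c20 : cyc s (s-1) 0 = 1 := by simp only [cyc]; omega
  have c30 : cyc t 1 0 = 1 := by simp only [cyc]; omega
  have c40 : cyc t (t-1) 0 = 1 := by simp only [cyc]; omega
  have c00s : cyc s 0 0 = 0 := by simp only [cyc]; omega
  have c00t : cyc t 0 0 = 0 := by simp only [cyc]; omega
  rcases H with h | h | h | h | h | h
  · exact ⟨1, 0, 0, 1, by omega, by omega, by omega, h⟩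
  · exact ⟨s-1, 0, 0, t-1, by omega, by omega, by omega, h⟩
  · exact ⟨1, 0, 0, t-1, by omega, by omega, by omega, h⟩
  · exact ⟨s-1, 0, 0, 1, by omega, by omega, by omega, h⟩
  · exact ⟨1, 0, s-1, 0, by omega, by omega, by omega, by omega⟩
  · exact ⟨0, 1, 0, t-1, by omega, by omega, by omega, by omega⟩

def PhiP (p p' q q' r r' u u' : Prop) : Prop :=
  ((p' ↔ q') ∧ (r' ↔ u')) ∨ ((p ↔ q) ∧ (r ↔ u)) ∨ ((p' ↔ q) ∧ (r' ↔ u)) ∨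
  ((p ↔ q') ∧ (r ↔ u')) ∨ ((p ↔ p') ∧ (r ↔ r')) ∨ ((q ↔ q') ∧ (u ↔ u')) ∨
  ((((p' ↔ p) ∧ (q' ↔ q)) ∨ ((p' ↔ q) ∧ (q' ↔ p))) ∧
    (((r' ↔ r) ∧ (u' ↔ u)) ∨ ((r' ↔ u) ∧ (u' ↔ r)))) ∨
  ((((p' ↔ p) ∧ (q ↔ q')) ∨ ((p' ↔ q') ∧ (q ↔ p))) ∧
    (((r' ↔ r) ∧ (u ↔ u')) ∨ ((r' ↔ u') ∧ (u ↔ r))))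

lemma core_three_center {s t m l P Q R C : ℕ} (hsm : s = 2*m) (htl : t = 2*l)
    (hm : 2 ≤ m) (hl : 2 ≤ l) (hP : P < s) (hQ : Q < t) (hR : R < s) (hC : C < t)
    (hΦ : PhiP (P < m) (P = 0 ∨ m < P) (Q < l) (Q = 0 ∨ l < Q)
               (R < m) (R = 0 ∨ m < R) (C < l) (C = 0 ∨ l < C)) :
    ∃ X1 Y1 X2 Y2 : ℕ, (X1 < s ∧ Y1 < t ∧ X2 < s ∧ Y2 < t) ∧ ¬(X1 = X2 ∧ Y1 = Y2) ∧
      (cyc s X1 0 + cyc t Y1 0 = cyc s X2 0 + cyc t Y2 0) ∧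
      (cyc s X1 P + cyc t Y1 Q = cyc s X2 P + cyc t Y2 Q) ∧
      (cyc s X1 R + cyc t Y1 C = cyc s X2 R + cyc t Y2 C) := by
  have c10 : cyc s 1 0 = 1 := by simp only [cyc]; omega
  have c20 : cyc s (s-1) 0 = 1 := by simp only [cyc]; omega
  have c30 : cyc t 1 0 = 1 := by simp only [cyc]; omega
  have c40 : cyc t (t-1) 0 = 1 := by simp only [cyc]; omega
  have c00s : cyc s 0 0 = 0 := by simp only [cyc]; omega
  have c00t : cyc t 0 0 = 0 := by simp only [cyc]; omega
  rcases hΦ with ⟨h1, h2⟩ | ⟨h1, h2⟩ | ⟨h1, h2⟩ | ⟨h1, h2⟩ | ⟨h1, h2⟩ | ⟨h1, h2⟩ |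
    ⟨h1, h2⟩ | ⟨h1, h2⟩
  · exact ⟨1, 0, 0, 1, by omega, by omega, by omega,
      conf1 hsm htl hm hl hP hQ h1, conf1 hsm htl hm hl hR hC h2⟩
  · exact ⟨s-1, 0, 0, t-1, by omega, by omega, by omega,
      conf2 hsm htl hm hl hP hQ h1, conf2 hsm htl hm hl hR hC h2⟩
  · exact ⟨1, 0, 0, t-1, by omega, by omega, by omega,
      conf3 hsm htl hm hl hP hQ h1, conf3 hsm htl hm hl hR hC h2⟩
  · exact ⟨s-1, 0, 0, 1, by omega, by omega, by omega,
      conf4 hsm htl hm hl hP hQ h1, conf4 hsm htl hm hl hR hC h2⟩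
  · have e1 := conf5 hsm hm hP h1
    have e2 := conf5 hsm hm hR h2
    exact ⟨1, 0, s-1, 0, by omega, by omega, by omega, by omega, by omega⟩
  · have e1 := conf6 htl hl hQ h1
    have e2 := conf6 htl hl hC h2
    exact ⟨0, 1, 0, t-1, by omega, by omega, by omega, by omega, by omega⟩
  · exact ⟨1, 1, s-1, t-1, by omega, by omega, by simp only [cyc]; omega,
      conf7 hsm htl hm hl hP hQ h1, conf7 hsm htl hm hl hR hC h2⟩
  · exact ⟨1, t-1, s-1, 1, by omega, by omega, by simp only [cyc]; omega,
      conf8 hsm htl hm hl hP hQ h1, conf8 hsm htl hm hl hR hC h2⟩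

def PhiB (p p' q q' r r' u u' : Bool) : Bool :=
  ((p' == q') && (r' == u')) || ((p == q) && (r == u)) || ((p' == q) && (r' == u)) ||
  ((p == q') && (r == u')) || ((p == p') && (r == r')) || ((q == q') && (u == u')) ||
  (((p' == p) && (q' == q)) || ((p' == q) && (q' == p))) &&
    (((r' == r) && (u' == u)) || ((r' == u) && (u' == r))) ||
  (((p' == p) && (q == q')) || ((p' == q') && (q == p))) &&
    (((r' == r) && (u == u')) || ((r' == u') && (u == r)))

theorem tautB : ∀ u1 l1 u2 l2 u3 l3 u4 l4 u5 l5 u6 l6 : Bool,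
    PhiB u1 l1 u2 l2 u3 l3 u4 l4 ∨ PhiB l1 u1 l2 u2 u5 l5 u6 l6 ∨
      PhiB l3 u3 l4 u4 l5 u5 l6 u6 := by decide

theorem tautP (p1 p1' q1 q1' p2 p2' q2 q2' p3 p3' q3 q3' : Prop)
    [Decidable p1] [Decidable p1'] [Decidable q1] [Decidable q1']
    [Decidable p2] [Decidable p2'] [Decidable q2] [Decidable q2']
    [Decidable p3] [Decidable p3'] [Decidable q3] [Decidable q3'] :
    PhiP p1 p1' q1 q1' p2 p2' q2 q2' ∨ PhiP p1' p1 q1' q1 p3 p3' q3 q3' ∨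
      PhiP p2' p2 q2' q2 p3' p3 q3' q3 := by
  have h := tautB (decide p1) (decide p1') (decide q1) (decide q1')
    (decide p2) (decide p2') (decide q2) (decide q2')
    (decide p3) (decide p3') (decide q3) (decide q3')
  simp only [PhiB, Bool.or_eq_true, Bool.and_eq_true, beq_iff_eq,
    decide_eq_decide, or_assoc] at h
  simp only [PhiP, or_assoc]
  exact h

/-! ### Fin facts -/

lemma sub_val {n : ℕ} (a b : Fin n) :
    (a - b).val = if b.val ≤ a.val then a.val - b.val else a.val + n - b.val := by
  have hb := b.isLt
  have ha := a.isLt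
  rw [Fin.sub_def]
  simp only
  split
  · have h1 : n - b.val + a.val = (a.val - b.val) + n := by omega
    rw [h1, Nat.add_mod_right, Nat.mod_eq_of_lt (by omega)]
  · rw [Nat.mod_eq_of_lt (by omega)]
    omega

lemma val_add_cases {n : ℕ} (a b : Fin n) :
    (a + b).val = a.val + b.val ∨ (a + b).val + n = a.val + b.val := by
  have hb := b.isLt
  have ha := a.isLt
  rw [Fin.add_def]
  simp only
  rcases Nat.lt_or_ge (a.val + b.val) n with h | h
  · left; exact Nat.mod_eq_of_lt h
  · right
    have h2 : (a.val + b.val) % n = (a.val + b.val - n) % n := by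
      conv_lhs => rw [← Nat.sub_add_cancel h, Nat.add_mod_right]
    rw [h2, Nat.mod_eq_of_lt (by omega)]
    omega

lemma pair_sum {n : ℕ} (a b : Fin n) :
    (a - b).val + (b - a).val = 0 ∨ (a - b).val + (b - a).val = n := by
  have ha := a.isLt
  have hb := b.isLt
  rw [sub_val, sub_val]
  split <;> split <;> omega

lemma one_val {n : ℕ} [NeZero n] (hn : 2 ≤ n) : (1 : Fin n).val = 1 := by
  rw [Fin.val_one', Nat.mod_eq_of_lt (by omega)]

lemma Fd_eq_cyc {n : ℕ} (i j : Fin n) :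
    min (i - j).val (j - i).val = cyc n i.val j.val := by
  have hi := i.isLt
  have hj := j.isLt
  simp only [sub_val, cyc]
  split <;> split <;> omega

lemma swapL {n m : ℕ} (hnm : n = 2*m) (hm : 1 ≤ m) (a b : Fin n) :
    ((a - b).val < m) ↔ ((b - a).val = 0 ∨ m < (b - a).val) := by
  have ha := a.isLt
  have hb := b.isLt
  simp only [sub_val]
  split <;> split <;> omega

/-! ### cycle graph distance -/

lemma cyc_conn {n : ℕ} (hn : 1 ≤ n) : (cycleGraph n).Connected := by
  obtain ⟨k, rfl⟩ := Nat.exists_eq_add_of_le' hn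
  exact cycleGraph_connected

lemma dist_le_sub {n : ℕ} (hn : 2 ≤ n) (i j : Fin n) :
    (cycleGraph n).dist i j ≤ (j - i).val := by
  haveI : NeZero n := ⟨by omega⟩
  suffices H : ∀ (k : ℕ) (i j : Fin n), (j - i).val = k → (cycleGraph n).dist i j ≤ k from
    H _ i j rfl
  intro k
  induction k with
  | zero =>
    intro i j h
    have h' : j - i = 0 := Fin.ext (by simpa using h)
    have : j = i := sub_eq_zero.mp h'
    simp [this]
  | succ k ih =>
    intro i j h
    have hadj : (cycleGraph n).Adj i (i + 1) := by
      rw [cycleGraph_adj']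
      right
      rw [add_sub_cancel_left, one_val hn]
    have hk : (j - (i + 1)).val = k := by
      have e : j - (i + 1) = (j - i) - 1 := by rw [sub_add_eq_sub_sub]
      rw [e, sub_val, one_val hn, h, if_pos (by omega : (1:ℕ) ≤ k + 1)]
      omega
    calc (cycleGraph n).dist i j
        ≤ (cycleGraph n).dist i (i+1) + (cycleGraph n).dist (i+1) j :=
          (cyc_conn (by omega)).dist_triangle
      _ ≤ 1 + k := by
          have h1 : (cycleGraph n).dist i (i+1) = 1 := dist_eq_one_iff_adj.mpr hadj
          have h2 := ih (i+1) j hk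
          omega
      _ = k + 1 := by omega

lemma walk_len_ge {n : ℕ} (hn : 2 ≤ n) {i j : Fin n} (p : (cycleGraph n).Walk i j) :
    min (j - i).val (i - j).val ≤ p.length := by
  induction p with
  | nil => simp [sub_val]
  | @cons i b j h p ih =>
    have hadj : (i - b).val = 1 ∨ (b - i).val = 1 := cycleGraph_adj'.mp h
    have F1 := pair_sum j i
    have F2 := pair_sum j b
    have F3 := pair_sum i b
    have hlink : (j - b) + (b - i) = j - i := by
      haveI : NeZero n := ⟨by omega⟩
      exact sub_add_sub_cancel j b i
    have F4 := val_add_cases (j - b) (b - i)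
    rw [hlink] at F4
    have b1 := (j - i).isLt
    have b2 := (i - j).isLt
    have b3 := (j - b).isLt
    have b4 := (b - j).isLt
    have b5 := (i - b).isLt
    have b6 := (b - i).isLt
    simp only [Walk.length_cons]
    omega

lemma cycle_dist {n : ℕ} (hn : 3 ≤ n) (i j : Fin n) :
    (cycleGraph n).dist i j = cyc n i.val j.val := by
  rw [← Fd_eq_cyc]
  apply le_antisymm
  · apply le_min
    · rw [SimpleGraph.dist_comm]
      exact dist_le_sub (by omega) j i
    · exact dist_le_sub (by omega) i j
  · obtain ⟨p, hp⟩ := (cyc_conn (by omega : 1 ≤ n)).exists_walk_length_eq_dist i j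
    have hlen := walk_len_ge (by omega : 2 ≤ n) p
    rw [hp] at hlen
    omega

/-! ### box product distance -/

lemma boxProd_walk_ge {α β : Type*} {G : SimpleGraph α} {H : SimpleGraph β}
    (hG : G.Connected) (hH : H.Connected) {x y : α × β}
    (p : (G □ H).Walk x y) : G.dist x.1 y.1 + H.dist x.2 y.2 ≤ p.length := by
  induction p with
  | nil => simp
  | @cons x z y h p ih =>
    simp only [Walk.length_cons]
    rcases boxProd_adj.mp h with ⟨hG', he⟩ | ⟨hH', he⟩
    · have t1 : G.dist x.1 y.1 ≤ G.dist x.1 z.1 + G.dist z.1 y.1 := hG.dist_triangle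
      have t2 : G.dist x.1 z.1 = 1 := dist_eq_one_iff_adj.mpr hG'
      have t3 : H.dist x.2 y.2 = H.dist z.2 y.2 := by rw [he]
      omega
    · have t1 : H.dist x.2 y.2 ≤ H.dist x.2 z.2 + H.dist z.2 y.2 := hH.dist_triangle
      have t2 : H.dist x.2 z.2 = 1 := dist_eq_one_iff_adj.mpr hH'
      have t3 : G.dist x.1 y.1 = G.dist z.1 y.1 := by rw [he]
      omega

lemma boxProd_dist {α β : Type*} {G : SimpleGraph α} {H : SimpleGraph β}
    (hG : G.Connected) (hH : H.Connected) (x y : α × β) :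
    (G □ H).dist x y = G.dist x.1 y.1 + H.dist x.2 y.2 := by
  obtain ⟨a, b⟩ := x
  obtain ⟨c, d⟩ := y
  apply le_antisymm
  · obtain ⟨p, hp⟩ := hG.exists_walk_length_eq_dist a c
    obtain ⟨q, hq⟩ := hH.exists_walk_length_eq_dist b d
    have hw := SimpleGraph.dist_le ((p.boxProdLeft H b).append (q.boxProdRight G c))
    have e1 : (p.boxProdLeft H b).length = p.length := Walk.length_map _ _
    have e2 : (q.boxProdRight G c).length = q.length := Walk.length_map _ _
    rw [Walk.length_append, e1, e2] at hw
    rw [hp, hq] at hw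
    exact hw
  · obtain ⟨p, hp⟩ := ((hG.boxProd hH).exists_walk_length_eq_dist (a, b) (c, d))
    have hlen := boxProd_walk_ge hG hH p
    rw [hp] at hlen
    exact hlen

/-! ### torus distance -/

lemma torus_dist {s t : ℕ} (hs : 3 ≤ s) (ht : 3 ≤ t) (u w : Fin s × Fin t) :
    (cycleGraph s □ cycleGraph t).dist u w
      = cyc s u.1.val w.1.val + cyc t u.2.val w.2.val := by
  rw [boxProd_dist (cyc_conn (by omega)) (cyc_conn (by omega)),
    cycle_dist hs, cycle_dist ht]

lemma cyc_rel {n : ℕ} [NeZero n] (x c d : Fin n) :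
    cyc n (x + c).val d.val = cyc n x.val (d - c).val := by
  have e1 : (x + c) - d = x - (d - c) := by abel
  have e2 : d - (x + c) = (d - c) - x := by abel
  calc cyc n (x + c).val d.val
      = min ((x + c) - d).val (d - (x + c)).val := (Fd_eq_cyc _ _).symm
    _ = min (x - (d - c)).val ((d - c) - x).val := by rw [e1, e2]
    _ = cyc n x.val (d - c).val := Fd_eq_cyc _ _

/-! ### assembly -/

lemma dist_shift {s t : ℕ} (hs : 3 ≤ s) (ht : 3 ≤ t) [NeZero s] [NeZero t]
    {X Y : ℕ} (hX : X < s) (hY : Y < t) (c1 : Fin s) (c2 : Fin t) (w : Fin s × Fin t) :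
    (cycleGraph s □ cycleGraph t).dist (⟨X, hX⟩ + c1, ⟨Y, hY⟩ + c2) w
      = cyc s X (w.1 - c1).val + cyc t Y (w.2 - c2).val := by
  rw [torus_dist hs ht]
  show cyc s ((⟨X, hX⟩ : Fin s) + c1).val w.1.val
      + cyc t ((⟨Y, hY⟩ : Fin t) + c2).val w.2.val = _
  rw [cyc_rel, cyc_rel]

lemma build_pair {s t : ℕ} (hs : 3 ≤ s) (ht : 3 ≤ t) [NeZero s] [NeZero t]
    {X1 Y1 X2 Y2 : ℕ} (hX1 : X1 < s) (hY1 : Y1 < t) (hX2 : X2 < s) (hY2 : Y2 < t)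
    (hne : ¬(X1 = X2 ∧ Y1 = Y2)) (c1 : Fin s) (c2 : Fin t) :
    ((⟨X1, hX1⟩ + c1, ⟨Y1, hY1⟩ + c2) : Fin s × Fin t) ≠ (⟨X2, hX2⟩ + c1, ⟨Y2, hY2⟩ + c2) := by
  intro hEq
  rw [Prod.mk.injEq] at hEq
  have h1 : (⟨X1, hX1⟩ : Fin s) = ⟨X2, hX2⟩ := add_right_cancel hEq.1
  have h2 : (⟨Y1, hY1⟩ : Fin t) = ⟨Y2, hY2⟩ := add_right_cancel hEq.2
  exact hne ⟨by simpa using congrArg Fin.val h1, by simpa using congrArg Fin.val h2⟩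

lemma self_diff_val {n : ℕ} [NeZero n] (a : Fin n) : (a - a).val = 0 := by
  rw [sub_self]
  simp

lemma unresolved_two {s t : ℕ} (hs : 3 ≤ s) (ht : 3 ≤ t) (w1 w2 : Fin s × Fin t) :
    ∃ u v : Fin s × Fin t, u ≠ v ∧
      (cycleGraph s □ cycleGraph t).dist u w1 = (cycleGraph s □ cycleGraph t).dist v w1 ∧
      (cycleGraph s □ cycleGraph t).dist u w2 = (cycleGraph s □ cycleGraph t).dist v w2 := by
  haveI : NeZero s := ⟨by omega⟩
  haveI : NeZero t := ⟨by omega⟩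
  obtain ⟨X1, Y1, X2, Y2, ⟨hX1, hY1, hX2, hY2⟩, hne, e0, e1⟩ :=
    core_two hs ht (w2.1 - w1.1).isLt (w2.2 - w1.2).isLt
  refine ⟨(⟨X1, hX1⟩ + w1.1, ⟨Y1, hY1⟩ + w1.2), (⟨X2, hX2⟩ + w1.1, ⟨Y2, hY2⟩ + w1.2),
    build_pair hs ht hX1 hY1 hX2 hY2 hne w1.1 w1.2, ?_, ?_⟩
  · rw [dist_shift hs ht, dist_shift hs ht, self_diff_val, self_diff_val]
    exact e0
  · rw [dist_shift hs ht, dist_shift hs ht]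
    exact e1

lemma unresolved_three {s t m l : ℕ} (hsm : s = 2*m) (htl : t = 2*l)
    (hm : 2 ≤ m) (hl : 2 ≤ l) (w1 w2 w3 : Fin s × Fin t) :
    ∃ u v : Fin s × Fin t, u ≠ v ∧
      (cycleGraph s □ cycleGraph t).dist u w1 = (cycleGraph s □ cycleGraph t).dist v w1 ∧
      (cycleGraph s □ cycleGraph t).dist u w2 = (cycleGraph s □ cycleGraph t).dist v w2 ∧
      (cycleGraph s □ cycleGraph t).dist u w3 = (cycleGraph s □ cycleGraph t).dist v w3 := by
  have hs : 3 ≤ s := by omega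
  have ht : 3 ≤ t := by omega
  haveI : NeZero s := ⟨by omega⟩
  haveI : NeZero t := ⟨by omega⟩
  obtain ⟨a1, b1⟩ := w1
  obtain ⟨a2, b2⟩ := w2
  obtain ⟨a3, b3⟩ := w3
  have hT := tautP ((a2 - a1).val < m) ((a2 - a1).val = 0 ∨ m < (a2 - a1).val)
      ((b2 - b1).val < l) ((b2 - b1).val = 0 ∨ l < (b2 - b1).val)
      ((a3 - a1).val < m) ((a3 - a1).val = 0 ∨ m < (a3 - a1).val)
      ((b3 - b1).val < l) ((b3 - b1).val = 0 ∨ l < (b3 - b1).val)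
      ((a3 - a2).val < m) ((a3 - a2).val = 0 ∨ m < (a3 - a2).val)
      ((b3 - b2).val < l) ((b3 - b2).val = 0 ∨ l < (b3 - b2).val)
  rcases hT with h | h | h
  · obtain ⟨X1, Y1, X2, Y2, ⟨hX1, hY1, hX2, hY2⟩, hne, e0, e1, e2⟩ :=
      core_three_center hsm htl hm hl (a2 - a1).isLt (b2 - b1).isLt
        (a3 - a1).isLt (b3 - b1).isLt h
    refine ⟨(⟨X1, hX1⟩ + a1, ⟨Y1, hY1⟩ + b1), (⟨X2, hX2⟩ + a1, ⟨Y2, hY2⟩ + b1),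
      build_pair hs ht hX1 hY1 hX2 hY2 hne a1 b1, ?_, ?_, ?_⟩
    · rw [dist_shift hs ht, dist_shift hs ht]
      dsimp only
      rw [self_diff_val, self_diff_val]
      exact e0
    · rw [dist_shift hs ht, dist_shift hs ht]
      dsimp only
      exact e1
    · rw [dist_shift hs ht, dist_shift hs ht]
      dsimp only
      exact e2
  · rw [← swapL hsm (by omega) a1 a2, swapL hsm (by omega) a2 a1,
      ← swapL htl (by omega) b1 b2, swapL htl (by omega) b2 b1] at h
    obtain ⟨X1, Y1, X2, Y2, ⟨hX1, hY1, hX2, hY2⟩, hne, e0, e1, e2⟩ :=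
      core_three_center hsm htl hm hl (a1 - a2).isLt (b1 - b2).isLt
        (a3 - a2).isLt (b3 - b2).isLt h
    refine ⟨(⟨X1, hX1⟩ + a2, ⟨Y1, hY1⟩ + b2), (⟨X2, hX2⟩ + a2, ⟨Y2, hY2⟩ + b2),
      build_pair hs ht hX1 hY1 hX2 hY2 hne a2 b2, ?_, ?_, ?_⟩
    · rw [dist_shift hs ht, dist_shift hs ht]
      dsimp only
      exact e1
    · rw [dist_shift hs ht, dist_shift hs ht]
      dsimp only
      rw [self_diff_val, self_diff_val]
      exact e0
    · rw [dist_shift hs ht, dist_shift hs ht]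
      dsimp only
      exact e2
  · rw [← swapL hsm (by omega) a1 a3, swapL hsm (by omega) a3 a1,
      ← swapL htl (by omega) b1 b3, swapL htl (by omega) b3 b1,
      ← swapL hsm (by omega) a2 a3, swapL hsm (by omega) a3 a2,
      ← swapL htl (by omega) b2 b3, swapL htl (by omega) b3 b2] at h
    obtain ⟨X1, Y1, X2, Y2, ⟨hX1, hY1, hX2, hY2⟩, hne, e0, e1, e2⟩ :=
      core_three_center hsm htl hm hl (a1 - a3).isLt (b1 - b3).isLt
        (a2 - a3).isLt (b2 - b3).isLt h
    refine ⟨(⟨X1, hX1⟩ + a3, ⟨Y1, hY1⟩ + b3), (⟨X2, hX2⟩ + a3, ⟨Y2, hY2⟩ + b3),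
      build_pair hs ht hX1 hY1 hX2 hY2 hne a3 b3, ?_, ?_, ?_⟩
    · rw [dist_shift hs ht, dist_shift hs ht]
      dsimp only
      exact e1
    · rw [dist_shift hs ht, dist_shift hs ht]
      dsimp only
      exact e2
    · rw [dist_shift hs ht, dist_shift hs ht]
      dsimp only
      rw [self_diff_val, self_diff_val]
      exact e0

lemma cover2 {α : Type*} (v0 : α) {W : Set α} (hfin : W.Finite) (h : W.ncard ≤ 2) :
    ∃ a b : α, W ⊆ {a, b} := by
  by_cases h2 : W.ncard = 2
  · obtain ⟨a, b, _, rfl⟩ := Set.ncard_eq_two.mp h2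
    exact ⟨a, b, subset_rfl⟩
  · by_cases h1 : W.ncard = 1
    · obtain ⟨a, rfl⟩ := Set.ncard_eq_one.mp h1
      exact ⟨a, a, by simp⟩
    · have h0 : W.ncard = 0 := by omega
      rw [Set.ncard_eq_zero hfin] at h0
      exact ⟨v0, v0, by simp [h0]⟩

lemma cover3 {α : Type*} (v0 : α) {W : Set α} (hfin : W.Finite) (h : W.ncard ≤ 3) :
    ∃ a b c : α, W ⊆ {a, b, c} := by
  by_cases h3 : W.ncard = 3
  · obtain ⟨a, b, c, _, _, _, rfl⟩ := Set.ncard_eq_three.mp h3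
    exact ⟨a, b, c, subset_rfl⟩
  · obtain ⟨a, b, hab⟩ := cover2 v0 hfin (by omega)
    exact ⟨a, b, b, hab.trans (by simp [Set.subset_def])⟩

lemma ge_three {s t : ℕ} (hs : 3 ≤ s) (ht : 3 ≤ t) (W : Set (Fin s × Fin t))
    (hres : IsResolving (cycleGraph s □ cycleGraph t) W) : 3 ≤ W.ncard := by
  by_contra hc
  obtain ⟨w1, w2, hsub⟩ := cover2 ((⟨0, by omega⟩, ⟨0, by omega⟩) : Fin s × Fin t)
    (Set.toFinite W) (by omega)
  obtain ⟨u, v, hne, e1, e2⟩ := unresolved_two hs ht w1 w2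
  obtain ⟨z, hzW, hzne⟩ := hres u v hne
  rcases Set.mem_insert_iff.mp (hsub hzW) with rfl | hz
  · exact hzne e1
  · rw [Set.mem_singleton_iff] at hz
    subst hz
    exact hzne e2

lemma ge_four {s t m l : ℕ} (hsm : s = 2*m) (htl : t = 2*l) (hm : 2 ≤ m) (hl : 2 ≤ l)
    (W : Set (Fin s × Fin t))
    (hres : IsResolving (cycleGraph s □ cycleGraph t) W) : 4 ≤ W.ncard := by
  by_contra hc
  obtain ⟨w1, w2, w3, hsub⟩ := cover3 ((⟨0, by omega⟩, ⟨0, by omega⟩) : Fin s × Fin t)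
    (Set.toFinite W) (by omega)
  obtain ⟨u, v, hne, e1, e2, e3⟩ := unresolved_three hsm htl hm hl w1 w2 w3
  obtain ⟨z, hzW, hzne⟩ := hres u v hne
  rcases Set.mem_insert_iff.mp (hsub hzW) with rfl | hz
  · exact hzne e1
  rcases Set.mem_insert_iff.mp hz with rfl | hz'
  · exact hzne e2
  · rw [Set.mem_singleton_iff] at hz'
    subst hz'
    exact hzne e3

lemma resolving_odd {s t a : ℕ} (hsa : s = 2*a+1) (hs : 3 ≤ s) (ht : 3 ≤ t) :
    ∃ W : Set (Fin s × Fin t), W.ncard = 3 ∧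
      IsResolving (cycleGraph s □ cycleGraph t) W := by
  have ha1 : 1 ≤ a := by omega
  refine ⟨{(⟨0, by omega⟩, ⟨0, by omega⟩), (⟨a, by omega⟩, ⟨0, by omega⟩),
    (⟨0, by omega⟩, ⟨1, by omega⟩)}, ?_, ?_⟩
  · rw [Set.ncard_insert_of_notMem (by
        simp only [Set.mem_insert_iff, Set.mem_singleton_iff, Prod.mk.injEq, Fin.mk.injEq]
        omega),
      Set.ncard_pair (by
        simp only [ne_eq, Prod.mk.injEq, Fin.mk.injEq]
        omega)]
  · intro x y hxy
    by_contra hcon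
    push_neg at hcon
    have h0 := hcon _ (Set.mem_insert _ _)
    have h1 := hcon _ (Set.mem_insert_of_mem _ (Set.mem_insert _ _))
    have h2 := hcon _ (Set.mem_insert_of_mem _ (Set.mem_insert_of_mem _ rfl))
    rw [torus_dist hs ht, torus_dist hs ht] at h0 h1 h2
    dsimp only at h0 h1 h2
    obtain ⟨hX, hY⟩ := core_odd hsa hs ht x.1.isLt y.1.isLt x.2.isLt y.2.isLt h0 h1 h2
    exact hxy (Prod.ext_iff.mpr ⟨Fin.ext hX, Fin.ext hY⟩)

lemma resolving_odd' {s t a : ℕ} (hta : t = 2*a+1) (hs : 3 ≤ s) (ht : 3 ≤ t) :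
    ∃ W : Set (Fin s × Fin t), W.ncard = 3 ∧
      IsResolving (cycleGraph s □ cycleGraph t) W := by
  have ha1 : 1 ≤ a := by omega
  refine ⟨{(⟨0, by omega⟩, ⟨0, by omega⟩), (⟨0, by omega⟩, ⟨a, by omega⟩),
    (⟨1, by omega⟩, ⟨0, by omega⟩)}, ?_, ?_⟩
  · rw [Set.ncard_insert_of_notMem (by
        simp only [Set.mem_insert_iff, Set.mem_singleton_iff, Prod.mk.injEq, Fin.mk.injEq]
        omega),
      Set.ncard_pair (by
        simp only [ne_eq, Prod.mk.injEq, Fin.mk.injEq]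
        omega)]
  · intro x y hxy
    by_contra hcon
    push_neg at hcon
    have h0 := hcon _ (Set.mem_insert _ _)
    have h1 := hcon _ (Set.mem_insert_of_mem _ (Set.mem_insert _ _))
    have h2 := hcon _ (Set.mem_insert_of_mem _ (Set.mem_insert_of_mem _ rfl))
    rw [torus_dist hs ht, torus_dist hs ht] at h0 h1 h2
    dsimp only at h0 h1 h2
    obtain ⟨hY, hX⟩ := core_odd hta ht hs x.2.isLt y.2.isLt x.1.isLt y.1.isLt
      (by omega) (by omega) (by omega)
    exact hxy (Prod.ext_iff.mpr ⟨Fin.ext hX, Fin.ext hY⟩)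

lemma resolving_even {s t m : ℕ} (hsm : s = 2*m) (hs : 3 ≤ s) (ht : 3 ≤ t) :
    ∃ W : Set (Fin s × Fin t), W.ncard = 4 ∧
      IsResolving (cycleGraph s □ cycleGraph t) W := by
  have hm1 : 2 ≤ m := by omega
  refine ⟨{(⟨0, by omega⟩, ⟨0, by omega⟩), (⟨m, by omega⟩, ⟨0, by omega⟩),
    (⟨0, by omega⟩, ⟨1, by omega⟩), (⟨1, by omega⟩, ⟨1, by omega⟩)}, ?_, ?_⟩
  · rw [Set.ncard_insert_of_notMem (by
        simp only [Set.mem_insert_iff, Set.mem_singleton_iff, Prod.mk.injEq, Fin.mk.injEq]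
        omega),
      Set.ncard_insert_of_notMem (by
        simp only [Set.mem_insert_iff, Set.mem_singleton_iff, Prod.mk.injEq, Fin.mk.injEq]
        omega),
      Set.ncard_pair (by
        simp only [ne_eq, Prod.mk.injEq, Fin.mk.injEq]
        omega)]
  · intro x y hxy
    by_contra hcon
    push_neg at hcon
    have h0 := hcon _ (Set.mem_insert _ _)
    have h1 := hcon _ (Set.mem_insert_of_mem _ (Set.mem_insert _ _))
    have h2 := hcon _ (Set.mem_insert_of_mem _ (Set.mem_insert_of_mem _ (Set.mem_insert _ _)))
    have h3 := hcon _ (Set.mem_insert_of_mem _ (Set.mem_insert_of_mem _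
      (Set.mem_insert_of_mem _ rfl)))
    rw [torus_dist hs ht, torus_dist hs ht] at h0 h1 h2 h3
    dsimp only at h0 h1 h2 h3
    obtain ⟨hX, hY⟩ := core_even hsm hs ht x.1.isLt y.1.isLt x.2.isLt y.2.isLt h0 h1 h2 h3
    exact hxy (Prod.ext_iff.mpr ⟨Fin.ext hX, Fin.ext hY⟩)

end TorusMD

/-- For `s, t ≥ 3`, the torus grid `C_s □ C_t` has metric dimension 3 if `s` or `t`
is odd, and metric dimension 4 if both `s` and `t` are even. -/
theorem metricDim_torus (s t : ℕ) (hs : 3 ≤ s) (ht : 3 ≤ t) :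
    ((Odd s ∨ Odd t) → metricDim (cycleGraph s □ cycleGraph t) = 3) ∧
    (Even s → Even t → metricDim (cycleGraph s □ cycleGraph t) = 4) := by
  constructor
  · intro hodd
    have hex : ∃ W : Set (Fin s × Fin t), W.ncard = 3 ∧
        IsResolving (cycleGraph s □ cycleGraph t) W := by
      rcases hodd with ⟨a, ha⟩ | ⟨a, ha⟩
      · exact TorusMD.resolving_odd (a := a) (by omega) hs ht
      · exact TorusMD.resolving_odd' (a := a) (by omega) hs ht
    obtain ⟨W, hW, hres⟩ := hex
    have hmem : 3 ∈ {n | ∃ W : Set (Fin s × Fin t), W.ncard = n ∧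
        IsResolving (cycleGraph s □ cycleGraph t) W} := ⟨W, hW, hres⟩
    refine le_antisymm (Nat.sInf_le hmem) ?_
    obtain ⟨W', hW', hres'⟩ := Nat.sInf_mem (⟨3, hmem⟩ : Set.Nonempty
      {n | ∃ W : Set (Fin s × Fin t), W.ncard = n ∧
        IsResolving (cycleGraph s □ cycleGraph t) W})
    have h3 := TorusMD.ge_three hs ht W' hres'
    rw [hW'] at h3
    exact h3
  · intro hse hte
    obtain ⟨m, hsm⟩ := hse
    obtain ⟨l, htl⟩ := hte
    have hsm' : s = 2*m := by omega
    have htl' : t = 2*l := by omega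
    have hm : 2 ≤ m := by omega
    have hl : 2 ≤ l := by omega
    obtain ⟨W, hW, hres⟩ := TorusMD.resolving_even hsm' hs ht
    have hmem : 4 ∈ {n | ∃ W : Set (Fin s × Fin t), W.ncard = n ∧
        IsResolving (cycleGraph s □ cycleGraph t) W} := ⟨W, hW, hres⟩
    refine le_antisymm (Nat.sInf_le hmem) ?_
    obtain ⟨W', hW', hres'⟩ := Nat.sInf_mem (⟨4, hmem⟩ : Set.Nonempty
      {n | ∃ W : Set (Fin s × Fin t), W.ncard = n ∧
        IsResolving (cycleGraph s □ cycleGraph t) W})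
    have h4 := TorusMD.ge_four hsm' htl' hm hl W' hres'
    rw [hW'] at h4
    exact h4
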